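/- Let K be a differential field with derivation D, let k ⊆ K be a subfield with K/k a finite Galois extension with group G = Gal(K/k), and suppose every σ ∈ G commutes with D. Let u ∈ K and let f : G → Kˣ satisfy both σ(u) − u = logD f(σ) for every σ ∈ G and the 1-cocycle condition f(στ) = f(σ)·σ(f(τ)) for all σ,τ ∈ G. Then there exist w ∈ k and F ∈ Kˣ such that u = w + logD F. -/

import Mathlib

/-- Let `K` be a differential field with derivation `D`, `k ⊆ K` a subfield
with `K/k` finite Galois with group `G`, each `σ ∈ G` commuting with `D`.  Let `u ∈ K` and
`f : G → Kˣ` satisfy `σ(u) − u = logD f(σ)` and the 1-cocycle condition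
`f(στ) = f(σ)·σ(f(τ))`.  Then there are `w ∈ k` and `F ∈ Kˣ` with `u = w + logD F`. -/
theorem stmt3 (k K : Type*) [Field k] [Field K] [Algebra k K]
    [FiniteDimensional k K] [IsGalois k K]
    (D : K → K)
    (hDadd : ∀ x y : K, D (x + y) = D x + D y)
    (hDmul : ∀ x y : K, D (x * y) = x * D y + D x * y)
    (hcomm : ∀ (σ : K ≃ₐ[k] K) (x : K), σ (D x) = D (σ x))
    (u : K) (f : (K ≃ₐ[k] K) → Kˣ)
    (hf : ∀ σ : K ≃ₐ[k] K, σ u - u = D (f σ : K) / (f σ : K))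
    (hcocycle : ∀ σ τ : K ≃ₐ[k] K, (f (σ * τ) : K) = (f σ : K) * σ (f τ : K)) :
    ∃ (w : k) (F : Kˣ), u = algebraMap k K w + D (F : K) / (F : K) := by
  -- D 1 = 0
  have hD1 : D 1 = 0 := by
    have h := hDmul 1 1
    rw [mul_one, one_mul] at h
    linear_combination -h
  -- D of inverse
  have hDinv : ∀ b : K, b ≠ 0 → D b⁻¹ = -(D b) / b ^ 2 := by
    intro b hb
    have h := hDmul b b⁻¹
    rw [mul_inv_cancel₀ hb, hD1] at h
    rw [eq_div_iff (pow_ne_zero 2 hb)]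
    linear_combination (-b) * h - D b * (mul_inv_cancel₀ hb)
  -- Hilbert 90
  have hcoc : groupCohomology.IsMulCocycle₁ f := by
    intro g h
    ext
    rw [hcocycle g h, mul_comm]
    rfl
  obtain ⟨β, hβ⟩ := groupCohomology.isMulCoboundary₁_of_isMulCocycle₁_of_aut_to_units f hcoc
  have hβne : (β : K) ≠ 0 := β.ne_zero
  -- for each σ, σ u - u = σ (logD β) - logD β
  have key : ∀ σ : K ≃ₐ[k] K, σ u - u = σ (D (β : K) / (β : K)) - D (β : K) / (β : K) := by
    intro σ
    have h1 := hf σ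
    have h2 : (f σ : K) = σ (β : K) / (β : K) := by
      rw [← hβ σ]
      simp [AlgEquiv.smul_units_def, Units.coe_map]
    have hσβ : σ (β : K) ≠ 0 := by
      simp [hβne]
    rw [h2] at h1
    have hDq : D (σ (β : K) / (β : K)) =
        σ (β : K) * (-(D (β : K)) / (β : K) ^ 2) + D (σ (β : K)) * (β : K)⁻¹ := by
      rw [div_eq_mul_inv, hDmul, hDinv _ hβne]
    rw [h1, hDq, map_div₀, hcomm]
    field_simp
    ring
  -- u - logD β is fixed by all σ
  have hfix : ∀ σ : K ≃ₐ[k] K, σ (u - D (β : K) / (β : K)) = u - D (β : K) / (β : K) := by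
    intro σ
    have := key σ
    rw [map_sub]
    linear_combination this
  -- hence it is in the bottom intermediate field
  have hxbot : u - D (β : K) / (β : K) ∈ (⊥ : IntermediateField k K) := by
    rw [← IsGalois.fixedField_fixingSubgroup (⊥ : IntermediateField k K),
      IntermediateField.fixingSubgroup_bot]
    exact fun ⟨σ, _⟩ => hfix σ
  obtain ⟨w, hw⟩ := IntermediateField.mem_bot.1 hxbot
  exact ⟨w, β, by rw [hw]; ring⟩
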